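/- Let A be a finite undirected multigraph with an edge e ∈ E_A whose endpoints u ≠ v are such that V_A = V₁ ⊔ V₂ with u ∈ V₁, v ∈ V₂ and every edge of A other than e has both endpoints in V₁ or both in V₂ (e is a bridge); write A₁, A₂ for the induced subgraphs on V₁, V₂, and A∖e for the multigraph with vertex set V_A and edge set E_A ∖ {e}, so A∖e = A₁ + A₂. Let β₁ : A₁ → B₁ and β₂ : A₂ → B₂ be injective homomorphisms, β : A∖e → B₁ + B₂ their disjoint union, α : A∖e → A the evident inclusion homomorphism, and let B be the multigraph obtained from the disjoint union B₁ + B₂ by adding one new edge ê with endpoints β₁(u) and β₂(v), with inclusion ι : B₁ + B₂ → B. Then for every finite undirected multigraph Z and every injective homomorphism g : B₁ + B₂ → Z, the following are equivalent: (i) there exists an injective homomorphism h : A → Z with h ∘ α = g ∘ β; (ii) there exists an injective homomorphism k : B → Z with k ∘ ι = g. -/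

import Mathlib

/-- A finite undirected multigraph: a finite vertex set, a finite edge set, and an
incidence map assigning to each edge its unordered pair of endpoints (loops allowed). -/
structure MG where
  V : Type
  E : Type
  finV : Finite V
  finE : Finite E
  inc : E → Sym2 V

/-- A homomorphism of finite undirected multigraphs: a pair of maps on vertices and edges
compatible with the incidence maps. -/
structure MG.Hom (G H : MG) where
  vmap : G.V → H.V
  emap : G.E → H.E
  comm : ∀ e, H.inc (emap e) = Sym2.map vmap (G.inc e)

/-- A homomorphism is injective if both its components are injective. -/
def MG.Hom.Injective {G H : MG} (φ : G.Hom H) : Prop :=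
  Function.Injective φ.vmap ∧ Function.Injective φ.emap

/-- A homomorphism is surjective if both its components are surjective. -/
def MG.Hom.Surjective {G H : MG} (φ : G.Hom H) : Prop :=
  Function.Surjective φ.vmap ∧ Function.Surjective φ.emap

/-- A homomorphism is an isomorphism if both its components are bijective. -/
def MG.Hom.IsIso {G H : MG} (φ : G.Hom H) : Prop :=
  Function.Bijective φ.vmap ∧ Function.Bijective φ.emap

/-- Composition of homomorphisms of multigraphs. -/
def MG.Hom.comp {G H K : MG} (ψ : H.Hom K) (φ : G.Hom H) : G.Hom K where
  vmap := ψ.vmap ∘ φ.vmap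
  emap := ψ.emap ∘ φ.emap
  comm := by
    intro e
    simp only [Function.comp_apply, ψ.comm, φ.comm, Sym2.map_map]

namespace MG

/-- The disjoint union (sum) of two finite undirected multigraphs. -/
def sum (G H : MG) : MG where
  V := G.V ⊕ H.V
  E := G.E ⊕ H.E
  finV := by have := G.finV; have := H.finV; exact inferInstance
  finE := by have := G.finE; have := H.finE; exact inferInstance
  inc := Sum.elim (fun e => Sym2.map Sum.inl (G.inc e)) (fun e => Sym2.map Sum.inr (H.inc e))

/-- The multigraph `G ∖ e` obtained from `G` by deleting the edge `e` (keeping all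
vertices). -/
def deleteEdge (G : MG) (e : G.E) : MG where
  V := G.V
  E := {x : G.E // x ≠ e}
  finV := G.finV
  finE := by have := G.finE; exact inferInstance
  inc := fun x => G.inc x.val

/-- The evident inclusion homomorphism `G ∖ e → G`. -/
def deleteEdgeHom (G : MG) (e : G.E) : (G.deleteEdge e).Hom G where
  vmap := id
  emap := Subtype.val
  comm := by intro x; simp [deleteEdge, Sym2.map_id]

/-- The multigraph obtained from `G` by adding one new edge with endpoints `a` and `b`. -/
def addEdge (G : MG) (a b : G.V) : MG where
  V := G.V
  E := Option G.E
  finV := G.finV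
  finE := by have := G.finE; have : Fintype G.E := Fintype.ofFinite _; exact inferInstance
  inc := fun x => x.elim s(a, b) G.inc

/-- The evident inclusion homomorphism from `G` into `G` with one extra edge added. -/
def addEdgeHom (G : MG) (a b : G.V) : G.Hom (G.addEdge a b) where
  vmap := id
  emap := some
  comm := by intro x; simp [addEdge, Sym2.map_id]

end MG


theorem MG.Hom.ext' {G H : MG} {φ ψ : G.Hom H} (hv : φ.vmap = ψ.vmap)
    (he : φ.emap = ψ.emap) : φ = ψ := by
  cases φ; cases ψ; simp_all

/-- **Bridges and the Shift construction (satisfaction level).** Let `e` be a bridge of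
`A` with endpoints `u ≠ v` separated by the partition `P` of the vertices (so that
`A ∖ e = A₁ + A₂`), let `β : A ∖ e → B₁ + B₂` be the disjoint union of injective
homomorphisms `β₁ : A₁ → B₁` and `β₂ : A₂ → B₂` (encoded by the hypotheses that `β` is
injective and maps the two parts of the partition into the two summands), let
`α : A ∖ e → A` be the inclusion, and let `B` be `B₁ + B₂` with one new edge joining
`β₁(u)` and `β₂(v)`, with inclusion `ι : B₁ + B₂ → B`. Then for every `Z` and every
injective `g : B₁ + B₂ → Z`: there is an injective `h : A → Z` with `h ∘ α = g ∘ β`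
iff there is an injective `k : B → Z` with `k ∘ ι = g`. -/
theorem mg_bridge_shift (A B₁ B₂ : MG) (e : A.E) (P : A.V → Prop) (u v : A.V)
    (hinc : A.inc e = s(u, v)) (huv : u ≠ v) (hu : P u) (hv : ¬ P v)
    (hbridge : ∀ x : A.E, x ≠ e → (∀ w ∈ A.inc x, P w) ∨ (∀ w ∈ A.inc x, ¬ P w))
    (β : (A.deleteEdge e).Hom (B₁.sum B₂)) (hβ : β.Injective)
    (hβ₁ : ∀ w : A.V, P w → ∃ b : B₁.V, β.vmap w = Sum.inl b)
    (hβ₂ : ∀ w : A.V, ¬ P w → ∃ b : B₂.V, β.vmap w = Sum.inr b)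
    (Z : MG) (g : (B₁.sum B₂).Hom Z) (hg : g.Injective) :
    (∃ h : A.Hom Z, h.Injective ∧ h.comp (A.deleteEdgeHom e) = g.comp β) ↔
    (∃ k : ((B₁.sum B₂).addEdge (β.vmap u) (β.vmap v)).Hom Z, k.Injective ∧
      k.comp ((B₁.sum B₂).addEdgeHom (β.vmap u) (β.vmap v)) = g) := by
  classical
  constructor
  · rintro ⟨h, ⟨hhv, hhe⟩, hcomp⟩
    have hvcomp : h.vmap = fun w => g.vmap (β.vmap w) :=
      congrArg MG.Hom.vmap hcomp
    obtain ⟨b₁, hb₁⟩ := hβ₁ u hu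
    obtain ⟨b₂, hb₂⟩ := hβ₂ v hv
    -- key fact: h.emap e is not in the range of g.emap
    have key : ∀ x : (B₁.sum B₂).E, h.emap e ≠ g.emap x := by
      intro x hx
      have hz : Z.inc (h.emap e) = Z.inc (g.emap x) := by rw [hx]
      rw [h.comm, g.comm, hinc] at hz
      have hmem : g.vmap (β.vmap v) ∈ Sym2.map g.vmap ((B₁.sum B₂).inc x) := by
        rw [← hz]
        simp [hvcomp]
      cases x with
      | inl x₁ =>
        simp only [MG.sum, Sum.elim_inl, Sym2.map_map] at hmem
        obtain ⟨w, _, hw⟩ := Sym2.mem_map.mp hmem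
        have := hg.1 hw
        rw [hb₂] at this
        exact Sum.inl_ne_inr this
      | inr x₂ =>
        simp only [MG.sum, Sum.elim_inr, Sym2.map_map] at hmem
        have hmem' : g.vmap (β.vmap u) ∈ Sym2.map g.vmap ((B₁.sum B₂).inc (Sum.inr x₂)) := by
          rw [← hz]; simp [hvcomp]
        simp only [MG.sum, Sum.elim_inr, Sym2.map_map] at hmem'
        obtain ⟨w, _, hw⟩ := Sym2.mem_map.mp hmem'
        have := hg.1 hw
        rw [hb₁] at this
        exact Sum.inr_ne_inl this
    refine ⟨{ vmap := g.vmap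
              emap := fun x => x.elim (h.emap e) g.emap
              comm := ?_ }, ⟨hg.1, ?_⟩, ?_⟩
    · intro x
      cases x with
      | none =>
        simp only [MG.addEdge, Option.elim]
        rw [h.comm, hinc]
        simp [hvcomp]
      | some x =>
        simp only [MG.addEdge, Option.elim]
        exact g.comm x
    · intro x y hxy
      cases x with
      | none =>
        cases y with
        | none => rfl
        | some y => exact absurd hxy (key y)
      | some x =>
        cases y with
        | none => exact absurd hxy.symm (key x)
        | some y => exact congrArg some (hg.2 hxy)
    · exact MG.Hom.ext' rfl rfl
  · rintro ⟨k, ⟨hkv, hke⟩, hcomp⟩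
    have hvcomp : k.vmap = g.vmap := congrArg MG.Hom.vmap hcomp
    have hecomp : ∀ x, k.emap (some x) = g.emap x := fun x =>
      congrFun (congrArg MG.Hom.emap hcomp) x
    refine ⟨{ vmap := fun w => g.vmap (β.vmap w)
              emap := fun x => if hx : x = e then k.emap none
                else g.emap (β.emap ⟨x, hx⟩)
              comm := ?_ }, ⟨?_, ?_⟩, ?_⟩
    · intro x
      by_cases hx : x = e
      · subst hx
        simp only [dif_pos]
        refine (k.comm none).trans ?_
        simp [MG.addEdge, hinc, hvcomp]
      · simp only [dif_neg hx]
        rw [g.comm]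
        refine (congrArg (Sym2.map g.vmap) (β.comm ⟨x, hx⟩)).trans ?_
        simp only [Sym2.map_map]
        rfl
    · exact hg.1.comp hβ.1
    · intro x y hxy
      dsimp only at hxy
      by_cases hx : x = e <;> by_cases hy : y = e
      · rw [hx, hy]
      · rw [dif_pos hx, dif_neg hy, ← hecomp] at hxy
        exact absurd (hke hxy) (by simp)
      · rw [dif_neg hx, dif_pos hy, ← hecomp] at hxy
        exact absurd (hke hxy) (by simp)
      · rw [dif_neg hx, dif_neg hy] at hxy
        have := hβ.2 (hg.2 hxy)
        exact congrArg Subtype.val (by exact this)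
    · refine MG.Hom.ext' rfl ?_
      funext x
      simp only [MG.Hom.comp, MG.deleteEdgeHom, Function.comp_apply, MG.Hom.comp]
      exact dif_neg x.prop
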